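/- arXiv:2102.12968 — 2 statements merged into one kernel-verified Lean document; each statement's English description precedes it below -/
import Mathlib

section
/- For positive integers n ≥ 2k and 0 ≤ a ≤ n/2 - k, one has (n/2 - a)^{\underline{k}} / n^{\underline{k}} ≤ ((n/2)^{\underline{k}} / n^{\underline{k}}) · ((n/2 - a)/(n/2))^k. -/
lemma desc_key (b m k : ℕ) (h : b ≤ m) :
    b.descFactorial k * m ^ k ≤ m.descFactorial k * b ^ k := by
  have e1 : b.descFactorial k * m ^ k = ∏ i ∈ Finset.range k, ((b - i) * m) := by
    rw [Nat.descFactorial_eq_prod_range, Finset.prod_mul_distrib,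
      Finset.prod_const, Finset.card_range]
  have e2 : m.descFactorial k * b ^ k = ∏ i ∈ Finset.range k, ((m - i) * b) := by
    rw [Nat.descFactorial_eq_prod_range, Finset.prod_mul_distrib,
      Finset.prod_const, Finset.card_range]
  rw [e1, e2]
  apply Finset.prod_le_prod'
  intro i _
  calc (b - i) * m = b * m - i * m := by rw [Nat.sub_mul]
    _ ≤ m * b - i * b := by
        rw [Nat.mul_comm b m]
        exact Nat.sub_le_sub_left (Nat.mul_le_mul_left i h) _
    _ = (m - i) * b := by rw [Nat.sub_mul]

/-- For positive integers `n ≥ 2k` (`n` even) and `0 ≤ a ≤ n/2 - k`: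
`(n/2 - a)^{\underline{k}} / n^{\underline{k}} ≤ ((n/2)^{\underline{k}} / n^{\underline{k}}) · ((n/2 - a)/(n/2))^k`. -/
theorem stmt_4 (n k a : ℕ) (hk : 1 ≤ k) (hev : Even n) (hnk : 2 * k ≤ n)
    (ha : a ≤ n / 2 - k) :
    ((n / 2 - a).descFactorial k : ℝ) / (n.descFactorial k : ℝ) ≤
      (((n / 2).descFactorial k : ℝ) / (n.descFactorial k : ℝ)) *
        (((n : ℝ) / 2 - (a : ℝ)) / ((n : ℝ) / 2)) ^ k := by
  set m := n / 2 with hm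
  set b := m - a with hb
  have hkm : k ≤ m := Nat.le_div_iff_mul_le (by norm_num) |>.2 (by omega)
  have hmpos : 0 < m := lt_of_lt_of_le hk hkm
  have ham : a ≤ m := le_trans ha (Nat.sub_le _ _)
  have hbm : b ≤ m := Nat.sub_le _ _
  have hn2 : (n : ℝ) / 2 = (m : ℝ) := by
    have := Nat.div_two_mul_two_of_even hev
    have : (m : ℝ) * 2 = (n : ℝ) := by exact_mod_cast this
    linarith
  have hba : (n : ℝ) / 2 - (a : ℝ) = (b : ℝ) := by
    rw [hn2, hb, Nat.cast_sub ham]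
  rw [hba, hn2]
  have hdn : 0 < (n.descFactorial k : ℝ) := by
    have : n.descFactorial k ≠ 0 := by
      simp [Nat.descFactorial_eq_zero_iff_lt]; omega
    exact_mod_cast Nat.pos_of_ne_zero this
  have hmr : (0 : ℝ) < (m : ℝ) := by exact_mod_cast hmpos
  rw [div_mul_eq_mul_div, div_le_div_iff_of_pos_right hdn, div_pow,
    ← mul_div_assoc, le_div_iff₀ (by positivity)]
  exact_mod_cast desc_key b m k hbm
end

section
/- (First moment upper bound for 2-colorability.) Let k → ∞, n = n(k) even with 2k ≤ n, and suppose c = c(n,k) > (1+ε)·ln(2)/φ(n,k) for some fixed ε > 0, with m = c·n·2^{k-1} = o(C(n,k)^{1/2}). Then the probability that the random hypergraph H_k(n, m) admits any proper 2-coloring tends to 0 as k → ∞. -/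
open Filter Finset

/-- `φ(n,k) = 2^k · (n/2)^{\underline{k}} / n^{\underline{k}}`. -/
noncomputable def phi (n k : ℕ) : ℝ :=
  2 ^ k * ((n / 2).descFactorial k : ℝ) / (n.descFactorial k : ℝ)

/-- A set of `k`-edges on `Fin n` is properly 2-colorable if some set `R` of vertices
(the red class) meets and avoids no edge entirely, i.e. no edge is monochromatic. -/
def TwoColorable {N : ℕ} (S : Finset (Finset (Fin N))) : Prop :=
  ∃ R : Finset (Fin N), ∀ e ∈ S, ¬ e ⊆ R ∧ ¬ e ⊆ Rᶜ

lemma choose_convex (h k : ℕ) : ∀ d, d ≤ h → 2 * Nat.choose h k ≤ Nat.choose (h+d) k + Nat.choose (h-d) k := by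
  intro d
  induction d with
  | zero => intro _; simp only [Nat.add_zero, Nat.sub_zero]; omega
  | succ d ih =>
    intro hd
    have ih' := ih (by omega)
    rcases k with _ | k'
    · simp [Nat.choose_zero_right]
    · have e1 : Nat.choose (h+(d+1)) (k'+1) = Nat.choose (h+d) k' + Nat.choose (h+d) (k'+1) := by
        rw [show h+(d+1) = (h+d)+1 by omega, Nat.choose_succ_succ]
      have e2 : Nat.choose (h-d) (k'+1) = Nat.choose (h-(d+1)) k' + Nat.choose (h-(d+1)) (k'+1) := by
        rw [show h-d = (h-(d+1))+1 by omega, Nat.choose_succ_succ]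
      have mono : Nat.choose (h-(d+1)) k' ≤ Nat.choose (h+d) k' :=
        Nat.choose_le_choose _ (by omega)
      omega

lemma descFactorial_pow_le (a b : ℕ) (hab : a ≤ b) : ∀ m, a.descFactorial m * b^m ≤ b.descFactorial m * a^m := by
  intro m
  induction m with
  | zero => simp
  | succ m ih =>
    rw [Nat.descFactorial_succ, Nat.descFactorial_succ, pow_succ, pow_succ]
    have key : (a - m) * b ≤ (b - m) * a := by
      rcases le_or_gt m a with hma | hma
      · rw [Nat.sub_mul, Nat.sub_mul]
        have : m * a ≤ m * b := Nat.mul_le_mul_left m hab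
        have : m * b ≤ a * b := Nat.mul_le_mul_right b hma
        have : a * b = b * a := Nat.mul_comm a b
        omega
      · rw [Nat.sub_eq_zero_of_le (by omega)]; simp
    calc (a - m) * a.descFactorial m * (b^m * b)
        = ((a-m)*b) * (a.descFactorial m * b^m) := by ring
      _ ≤ ((b-m)*a) * (b.descFactorial m * a^m) := Nat.mul_le_mul key ih
      _ = (b-m) * b.descFactorial m * (a^m * a) := by ring

lemma choose_pow_le (a b m : ℕ) (hab : a ≤ b) : a.choose m * b^m ≤ b.choose m * a^m := by
  have h := descFactorial_pow_le a b hab m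
  rw [Nat.descFactorial_eq_factorial_mul_choose, Nat.descFactorial_eq_factorial_mul_choose] at h
  have hfac := m.factorial_pos
  calc a.choose m * b^m = (m.factorial * (a.choose m * b^m))/m.factorial := by
        rw [Nat.mul_div_cancel_left _ hfac]
    _ ≤ (m.factorial * (b.choose m * a^m))/m.factorial := by
        apply Nat.div_le_div_right; rw [← Nat.mul_assoc, ← Nat.mul_assoc] at *; omega
    _ = b.choose m * a^m := Nat.mul_div_cancel_left _ hfac

lemma good_card (ν k : ℕ) (hk : 1 ≤ k) (hev : ν % 2 = 0) (R : Finset (Fin ν)) :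
    ((((Finset.univ : Finset (Fin ν)).powersetCard k)).filter (fun e => ¬ e ⊆ R ∧ ¬ e ⊆ Rᶜ)).card
      ≤ ν.choose k - 2 * ((ν/2).choose k) := by
  classical
  set A := (Finset.univ : Finset (Fin ν)).powersetCard k with hAdef
  have hA : A.card = ν.choose k := by
    simp [hAdef, Finset.card_powersetCard]
  have hsplit := Finset.card_filter_add_card_filter_not
    (s := A) (p := fun e => ¬ e ⊆ R ∧ ¬ e ⊆ Rᶜ)
  have hdisj : Disjoint (R.powersetCard k) (Rᶜ.powersetCard k) := by
    rw [Finset.disjoint_left]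
    intro e h1 h2
    rw [Finset.mem_powersetCard] at h1 h2
    have hsub : e ⊆ R ∩ Rᶜ := Finset.subset_inter h1.1 h2.1
    rw [Finset.inter_compl] at hsub
    have : e = ∅ := Finset.subset_empty.mp hsub
    rw [this] at h1
    simp at h1
    omega
  have hsub : R.powersetCard k ∪ Rᶜ.powersetCard k
      ⊆ A.filter (fun e => ¬(¬ e ⊆ R ∧ ¬ e ⊆ Rᶜ)) := by
    intro e he
    simp only [Finset.mem_union, Finset.mem_powersetCard] at he
    simp only [Finset.mem_filter, hAdef, Finset.mem_powersetCard, not_and, not_not]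
    rcases he with ⟨h1, h2⟩ | ⟨h1, h2⟩
    · exact ⟨⟨Finset.subset_univ e, h2⟩, fun h => absurd h1 h⟩
    · exact ⟨⟨Finset.subset_univ e, h2⟩, fun _ => h1⟩
  have hcard_union : (R.powersetCard k ∪ Rᶜ.powersetCard k).card
      = R.card.choose k + (ν - R.card).choose k := by
    rw [Finset.card_union_of_disjoint hdisj, Finset.card_powersetCard,
      Finset.card_powersetCard, Finset.card_compl, Fintype.card_fin]
  have hr : R.card ≤ ν := by
    have := Finset.card_le_univ R
    simpa using this
  have hconv : 2 * ((ν/2).choose k) ≤ R.card.choose k + (ν - R.card).choose k := by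
    rcases le_or_gt (ν/2) R.card with hrr | hrr
    · have h := choose_convex (ν/2) k (R.card - ν/2) (by omega)
      have e1 : ν/2 + (R.card - ν/2) = R.card := by omega
      have e2 : ν/2 - (R.card - ν/2) ≤ ν - R.card := by omega
      rw [e1] at h
      have := Nat.choose_le_choose k e2
      omega
    · have h := choose_convex (ν/2) k (ν/2 - R.card) (by omega)
      have e1 : ν/2 - (ν/2 - R.card) = R.card := by omega
      have e2 : ν/2 + (ν/2 - R.card) ≤ ν - R.card := by omega
      rw [e1] at h
      have := Nat.choose_le_choose k e2
      omega
  have hle := Finset.card_le_card hsub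
  omega

lemma numer_bound (ν k M : ℕ) (hk : 1 ≤ k) (hev : ν % 2 = 0) :
    Nat.card {S : Finset (Finset (Fin ν)) //
        S ∈ ((Finset.univ : Finset (Fin ν)).powersetCard k).powersetCard M ∧ TwoColorable S}
      ≤ 2^ν * Nat.choose (ν.choose k - 2 * ((ν/2).choose k)) M := by
  classical
  rw [Nat.card_eq_fintype_card, Fintype.card_subtype]
  have hsub : ((Finset.univ : Finset (Finset (Finset (Fin ν)))).filter
        fun S => S ∈ ((Finset.univ : Finset (Fin ν)).powersetCard k).powersetCard M ∧ TwoColorable S)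
      ⊆ (Finset.univ : Finset (Finset (Fin ν))).biUnion
          (fun R => ((((Finset.univ : Finset (Fin ν)).powersetCard k)).filter
            (fun e => ¬ e ⊆ R ∧ ¬ e ⊆ Rᶜ)).powersetCard M) := by
    intro S hS
    simp only [Finset.mem_filter, Finset.mem_univ, true_and] at hS
    obtain ⟨hSmem, R, hR⟩ := hS
    refine Finset.mem_biUnion.mpr ⟨R, Finset.mem_univ R, ?_⟩
    rw [Finset.mem_powersetCard] at hSmem ⊢
    exact ⟨fun e he => Finset.mem_filter.mpr ⟨hSmem.1 he, hR e he⟩, hSmem.2⟩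
  calc ((Finset.univ : Finset (Finset (Finset (Fin ν)))).filter
        fun S => S ∈ ((Finset.univ : Finset (Fin ν)).powersetCard k).powersetCard M ∧ TwoColorable S).card
      ≤ ((Finset.univ : Finset (Finset (Fin ν))).biUnion
          (fun R => ((((Finset.univ : Finset (Fin ν)).powersetCard k)).filter
            (fun e => ¬ e ⊆ R ∧ ¬ e ⊆ Rᶜ)).powersetCard M)).card := Finset.card_le_card hsub
    _ ≤ ∑ R : Finset (Fin ν), (((((Finset.univ : Finset (Fin ν)).powersetCard k)).filter
            (fun e => ¬ e ⊆ R ∧ ¬ e ⊆ Rᶜ)).powersetCard M).card := Finset.card_biUnion_le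
    _ ≤ ∑ _R : Finset (Fin ν), Nat.choose (ν.choose k - 2 * ((ν/2).choose k)) M := by
        apply Finset.sum_le_sum
        intro R _
        rw [Finset.card_powersetCard]
        exact Nat.choose_le_choose M (good_card ν k hk hev R)
    _ = 2^ν * Nat.choose (ν.choose k - 2 * ((ν/2).choose k)) M := by
        rw [Finset.sum_const, Finset.card_univ]
        simp [Fintype.card_finset, mul_comm]

lemma choose_div_le (a b M : ℕ) (hab : a ≤ b) (hb : 0 < b) :
    (a.choose M : ℝ)/(b.choose M : ℝ) ≤ ((a:ℝ)/(b:ℝ))^M := by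
  rcases le_or_gt M b with hMb | hMb
  · have hbc : 0 < b.choose M := Nat.choose_pos hMb
    have hkey : ((a.choose M : ℝ)) * (b:ℝ)^M ≤ ((b.choose M : ℝ)) * (a:ℝ)^M := by
      exact_mod_cast choose_pow_le a b M hab
    rw [div_pow, div_le_div_iff₀ (by exact_mod_cast hbc) (by positivity)]
    linarith [hkey]
  · rw [Nat.choose_eq_zero_of_lt (lt_of_le_of_lt hab hMb)]
    simp only [Nat.cast_zero, zero_div]
    positivity

/-- First moment upper bound: if `c > (1+ε)·ln 2/φ(n,k)` and `m = c·n·2^{k-1}` with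
`m = o(C(n,k)^{1/2})`, then the probability that the uniform random `k`-graph with `m`
distinct edges on `n` vertices is 2-colorable tends to `0` as `k → ∞`. -/
theorem stmt_12 (n m : ℕ → ℕ) (c : ℕ → ℝ) (ε : ℝ) (hε : 0 < ε)
    (hev : ∀ k, Even (n k)) (hge : ∀ k, 2 * k ≤ n k)
    (hc : ∀ k, c k > (1 + ε) * Real.log 2 / phi (n k) k)
    (hm : ∀ k, (m k : ℝ) = c k * (n k : ℝ) * 2 ^ (k - 1))
    (hmo : Tendsto (fun k => (m k : ℝ) / ((n k).choose k : ℝ) ^ ((1 : ℝ) / 2))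
      atTop (nhds 0)) :
    Tendsto (fun k =>
        (Nat.card {S : Finset (Finset (Fin (n k))) //
            S ∈ ((Finset.univ : Finset (Fin (n k))).powersetCard k).powersetCard (m k) ∧
            TwoColorable S} : ℝ) /
        (Nat.card {S : Finset (Finset (Fin (n k))) //
            S ∈ ((Finset.univ : Finset (Fin (n k))).powersetCard k).powersetCard (m k)} : ℝ))
      atTop (nhds 0) := by
  have hlog2 : (0:ℝ) < Real.log 2 := Real.log_pos one_lt_two
  have hg : Tendsto (fun k : ℕ => Real.exp (-(2 * ε * Real.log 2) * k)) atTop (nhds 0) := by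
    apply Real.tendsto_exp_atBot.comp
    have h1 : Tendsto (fun k : ℕ => (2*ε*Real.log 2) * (k:ℝ)) atTop atTop :=
      (tendsto_natCast_atTop_atTop).const_mul_atTop (by positivity)
    have h2 := tendsto_neg_atTop_atBot.comp h1
    convert h2 using 2 with k
    simp [neg_mul]
  apply squeeze_zero' (Eventually.of_forall fun k => div_nonneg (Nat.cast_nonneg _) (Nat.cast_nonneg _))
    ?_ hg
  filter_upwards [eventually_ge_atTop 1] with k hk1
  set ν := n k with hνdef
  set M := m k with hMdef
  set N := ν.choose k with hNdef
  set B := (ν/2).choose k with hBdef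
  have hevk : ν % 2 = 0 := Nat.even_iff.mp (hev k)
  have hνk : 2 * k ≤ ν := hge k
  have hkν2 : k ≤ ν / 2 := by omega
  have hden : Nat.card {S : Finset (Finset (Fin ν)) //
      S ∈ ((Finset.univ : Finset (Fin ν)).powersetCard k).powersetCard M} = Nat.choose N M := by
    rw [Nat.card_eq_fintype_card, Fintype.card_coe]
    simp [Finset.card_powersetCard, hNdef]
  have hNpos : 0 < N := Nat.choose_pos (by omega)
  have h2B : 2 * B ≤ N := by
    have h := choose_convex (ν/2) k (ν/2) le_rfl
    have e1 : ν/2 + ν/2 = ν := by omega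
    have e2 : ν/2 - ν/2 = 0 := by omega
    rw [e1, e2, Nat.choose_eq_zero_of_lt (by omega : (0:ℕ) < k)] at h
    omega
  have hφpos : 0 < phi ν k := by
    have hd1 : 0 < (ν/2).descFactorial k := by
      rcases Nat.eq_zero_or_pos ((ν/2).descFactorial k) with h | h
      · exact absurd (Nat.descFactorial_eq_zero_iff_lt.mp h) (by omega)
      · exact h
    have hd2 : 0 < ν.descFactorial k := by
      rcases Nat.eq_zero_or_pos (ν.descFactorial k) with h | h
      · exact absurd (Nat.descFactorial_eq_zero_iff_lt.mp h) (by omega)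
      · exact h
    unfold phi
    have h1 : (0:ℝ) < ((ν/2).descFactorial k : ℝ) := by exact_mod_cast hd1
    have h2 : (0:ℝ) < (ν.descFactorial k : ℝ) := by exact_mod_cast hd2
    positivity
  have hcφ : (1+ε) * Real.log 2 < c k * phi ν k := by
    have h : (1 + ε) * Real.log 2 / phi ν k < c k := hc k
    rw [div_lt_iff₀ hφpos] at h
    linarith
  have hBN : (B:ℝ)/(N:ℝ) = phi ν k / 2^k := by
    have hdfν : (ν.descFactorial k : ℝ) = (k.factorial : ℝ) * N := by
      exact_mod_cast Nat.descFactorial_eq_factorial_mul_choose ν k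
    have hdfh : ((ν/2).descFactorial k : ℝ) = (k.factorial : ℝ) * B := by
      exact_mod_cast Nat.descFactorial_eq_factorial_mul_choose (ν/2) k
    have hfne : (k.factorial : ℝ) ≠ 0 := by exact_mod_cast k.factorial_pos.ne'
    have hNne : (N:ℝ) ≠ 0 := by exact_mod_cast hNpos.ne'
    unfold phi
    rw [hdfν, hdfh]
    field_simp
  -- main inequality
  rw [hden]
  by_cases hd : Nat.choose N M = 0
  · rw [hd]
    simp only [Nat.cast_zero, div_zero]
    exact (Real.exp_pos _).le
  · have hdpos : 0 < Nat.choose N M := Nat.pos_of_ne_zero hd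
    have hnum := numer_bound ν k M (by omega) hevk
    simp only [← hNdef, ← hBdef] at hnum
    have hdposR : (0:ℝ) < (Nat.choose N M : ℝ) := by exact_mod_cast hdpos
    have hNR : (0:ℝ) < (N:ℝ) := by exact_mod_cast hNpos
    calc (Nat.card {S : Finset (Finset (Fin ν)) //
            S ∈ ((Finset.univ : Finset (Fin ν)).powersetCard k).powersetCard M ∧
            TwoColorable S} : ℝ) / (Nat.choose N M : ℝ)
        ≤ ((2^ν * Nat.choose (N - 2*B) M : ℕ) : ℝ) / (Nat.choose N M : ℝ) := by
          gcongr
      _ = (2:ℝ)^ν * ((Nat.choose (N - 2*B) M : ℝ) / (Nat.choose N M : ℝ)) := by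
          push_cast
          ring
      _ ≤ (2:ℝ)^ν * (((N - 2*B : ℕ):ℝ)/(N:ℝ))^M := by
          apply mul_le_mul_of_nonneg_left _ (by positivity)
          exact choose_div_le (N - 2*B) N M (by omega) hNpos
      _ ≤ (2:ℝ)^ν * (Real.exp (-(2*(B:ℝ)/(N:ℝ))))^M := by
          apply mul_le_mul_of_nonneg_left _ (by positivity)
          apply pow_le_pow_left₀ (by positivity)
          rw [Nat.cast_sub h2B]
          have hexp := Real.add_one_le_exp (-(2*(B:ℝ)/(N:ℝ)))
          have : ((N:ℝ) - (2*B:ℕ))/(N:ℝ) = 1 - 2*(B:ℝ)/(N:ℝ) := by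
            push_cast
            field_simp
          rw [this]
          linarith
      _ = (2:ℝ)^ν * Real.exp (-(2*(B:ℝ)/(N:ℝ)) * M) := by
          rw [← Real.exp_nat_mul]
          ring_nf
      _ ≤ Real.exp (-(2 * ε * Real.log 2) * k) := by
          have h2pow : (2:ℝ)^ν = Real.exp (ν * Real.log 2) := by
            rw [Real.exp_nat_mul, Real.exp_log (show (0:ℝ) < 2 by norm_num)]
          rw [h2pow, ← Real.exp_add]
          apply Real.exp_le_exp.mpr
          have hMval : (M:ℝ) = c k * ν * 2^(k-1) := hm k
          have hpow2 : (2:ℝ)^(k-1) * 2 = 2^k := by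
            rw [← pow_succ]
            congr 1
            omega
          have hkey : 2*(B:ℝ)/(N:ℝ) * M = c k * ν * phi ν k := by
            have : 2*(B:ℝ)/(N:ℝ) = 2 * (phi ν k / 2^k) := by
              rw [← hBN]; ring
            have h2kne : (2:ℝ)^k ≠ 0 := by positivity
            calc 2*(B:ℝ)/(N:ℝ) * M = 2 * ((B:ℝ)/(N:ℝ)) * M := by ring
              _ = 2 * (phi ν k / 2^k) * (c k * ν * 2^(k-1)) := by rw [hBN, hMval]
              _ = (c k * ν * phi ν k) * ((2^(k-1) * 2) / 2^k) := by ring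
              _ = c k * ν * phi ν k := by rw [hpow2, div_self h2kne, mul_one]
          have hν2k : (2*k:ℝ) ≤ (ν:ℝ) := by exact_mod_cast hνk
          have hcφν : (1+ε) * Real.log 2 * ν ≤ c k * phi ν k * ν := by
            apply mul_le_mul_of_nonneg_right hcφ.le (Nat.cast_nonneg _)
          have e3 : -(2*(B:ℝ)/(N:ℝ)) * (M:ℝ) = -(c k * ν * phi ν k) := by
            rw [neg_mul, hkey]
          rw [e3]
          have e4 : 0 ≤ ε * Real.log 2 * ((ν:ℝ) - 2*k) :=
            mul_nonneg (mul_nonneg hε.le hlog2.le) (by linarith)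
          nlinarith [hcφν, e4]
end
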